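/- With C_x symmetric positive definite, a nonzero, and U as a matrix of orthonormal columns spanning a⊥, the vector b₄ᵀ = (aᵀ/|a|²) C_x⁻¹ - (aᵀ/|a|²) C_x⁻¹ U (Uᵀ C_x⁻¹ U)⁻¹ Uᵀ C_x⁻¹ satisfies b₄ᵀ U = 0 and b₄ᵀ (a/|a|²) = (aᵀ C_x a)⁻¹; consequently b₄ = (aᵀ C_x a)⁻¹ a. -/

import Mathlib

open Matrix

theorem b4_is_scaled_a {K : ℕ} (hK : 2 ≤ K)
    (Cx : Matrix (Fin K) (Fin K) ℝ) (hCx : Cx.PosDef)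
    (a : Fin K → ℝ) (ha : a ≠ 0)
    (U : Matrix (Fin K) (Fin (K-1)) ℝ)
    (hUU : Uᵀ * U = 1) (hUa : Uᵀ.mulVec a = 0)
    (b₄ : Fin K → ℝ)
    (hb₄ : b₄ = (a ⬝ᵥ a)⁻¹ •
      (Cx⁻¹.mulVec a - (Cx⁻¹ * U * (Uᵀ * Cx⁻¹ * U)⁻¹ * Uᵀ * Cx⁻¹).mulVec a)) :
    Uᵀ.mulVec b₄ = 0 ∧
    b₄ ⬝ᵥ ((a ⬝ᵥ a)⁻¹ • a) = (a ⬝ᵥ Cx.mulVec a)⁻¹ ∧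
    b₄ = (a ⬝ᵥ Cx.mulVec a)⁻¹ • a := by
  have hs : (0:ℝ) < a ⬝ᵥ a := by
    have h0 : (0:ℝ) ≤ a ⬝ᵥ a := Finset.sum_nonneg fun i _ => mul_self_nonneg _
    rcases lt_or_eq_of_le h0 with h | h
    · exact h
    · exact absurd (dotProduct_self_eq_zero.mp h.symm) ha
  have hM : Cx⁻¹.PosDef := hCx.inv
  -- N := Uᵀ * Cx⁻¹ * U is PosDef
  have hN : (Uᵀ * Cx⁻¹ * U).PosDef := by
    refine Matrix.PosDef.of_dotProduct_mulVec_pos ?_ ?_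
    · have := isHermitian_conjTranspose_mul_mul U hM.1
      rwa [conjTranspose_eq_transpose_of_trivial] at this
    · intro x hx
      have hUx : U *ᵥ x ≠ 0 := by
        intro h
        apply hx
        have : (Uᵀ * U) *ᵥ x = Uᵀ *ᵥ (U *ᵥ x) := (mulVec_mulVec _ _ _).symm
        rw [hUU, one_mulVec, h, mulVec_zero] at this
        exact this
      have := hM.dotProduct_mulVec_pos hUx
      simpa [star_mulVec, dotProduct_mulVec, Matrix.mul_assoc, vecMul_vecMul,
        ← mulVec_transpose] using this
  have hNN : (Uᵀ * Cx⁻¹ * U) * (Uᵀ * Cx⁻¹ * U)⁻¹ = 1 :=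
    Matrix.mul_nonsing_inv _ hN.det_pos.ne'.isUnit
  -- Claim 1 : Uᵀ *ᵥ b₄ = 0
  have hkey : Uᵀ * (Cx⁻¹ * U * (Uᵀ * Cx⁻¹ * U)⁻¹ * Uᵀ * Cx⁻¹) = Uᵀ * Cx⁻¹ := by
    simp only [← Matrix.mul_assoc]
    rw [hNN, Matrix.one_mul]
  have claim1 : Uᵀ *ᵥ b₄ = 0 := by
    rw [hb₄, mulVec_smul, mulVec_sub, mulVec_mulVec, mulVec_mulVec, hkey, sub_self, smul_zero]
  -- Cx *ᵥ b₄
  have hCxinv : Cx * Cx⁻¹ = 1 := Matrix.mul_nonsing_inv _ hCx.det_pos.ne'.isUnit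
  have hCb : Cx *ᵥ b₄ = (a ⬝ᵥ a)⁻¹ •
      (a - (U * ((Uᵀ * Cx⁻¹ * U)⁻¹ * Uᵀ * Cx⁻¹)) *ᵥ a) := by
    rw [hb₄, mulVec_smul, mulVec_sub, mulVec_mulVec, mulVec_mulVec]
    congr 2
    · rw [hCxinv, one_mulVec]
    · simp only [← Matrix.mul_assoc]
      rw [show Cx * Cx⁻¹ * U = U by rw [hCxinv, Matrix.one_mul]]
  have haU : ∀ (y : Fin (K-1) → ℝ), a ⬝ᵥ U *ᵥ y = 0 := by
    intro y
    rw [dotProduct_mulVec, ← mulVec_transpose, hUa, zero_dotProduct]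
  have haCb : a ⬝ᵥ Cx *ᵥ b₄ = 1 := by
    rw [hCb, dotProduct_smul, dotProduct_sub, ← mulVec_mulVec, haU, sub_zero]
    simp [inv_mul_cancel₀ hs.ne']
  -- spanning : b₄ = ((a⬝a)⁻¹ * (a ⬝ᵥ b₄)) • a
  have hcard : K - 1 + 1 = K := by omega
  have e : Fin K ≃ Fin (K-1) ⊕ Fin 1 :=
    (finCongr hcard.symm).trans finSumFinEquiv.symm
  have hVB : fromCols U (replicateCol (Fin 1) a) *
      fromRows Uᵀ ((a ⬝ᵥ a)⁻¹ • replicateRow (Fin 1) a) = 1 := by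
    rw [fromCols_mul_fromRows_eq_one_comm e]
    rw [fromRows_mul_fromCols]
    rw [show Uᵀ * replicateCol (Fin 1) a = 0 by
      ext i j
      simp [mul_apply, replicateCol]
      have := congrFun hUa i
      simpa [mulVec, dotProduct] using this]
    rw [show ((a ⬝ᵥ a)⁻¹ • replicateRow (Fin 1) a) * U = 0 by
      rw [Matrix.smul_mul]
      rw [show replicateRow (Fin 1) a * U = 0 by
        ext i j
        have := congrFun hUa j
        simp [mul_apply, replicateRow, transpose] at this ⊢
        rw [← this]
        exact Finset.sum_congr rfl fun k _ => mul_comm _ _]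
      simp]
    rw [show ((a ⬝ᵥ a)⁻¹ • replicateRow (Fin 1) a) * replicateCol (Fin 1) a = 1 by
      rw [Matrix.smul_mul, replicateRow_mul_replicateCol]
      ext i j
      simp [inv_mul_cancel₀ hs.ne', Subsingleton.elim i j, Matrix.one_apply]]
    rw [hUU]
    exact fromBlocks_one
  have hspan : b₄ = ((a ⬝ᵥ a)⁻¹ * (a ⬝ᵥ b₄)) • a := by
    have h1 : (fromCols U (replicateCol (Fin 1) a) *
        fromRows Uᵀ ((a ⬝ᵥ a)⁻¹ • replicateRow (Fin 1) a)) *ᵥ b₄ = b₄ := by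
      rw [hVB, one_mulVec]
    rw [fromCols_mul_fromRows] at h1
    rw [add_mulVec, ← mulVec_mulVec, claim1, mulVec_zero, zero_add] at h1
    ext i
    rw [← congrFun h1 i]
    simp only [mul_apply, mulVec, dotProduct, replicateCol, replicateRow, Matrix.smul_apply, smul_eq_mul,
      Pi.smul_apply, of_apply, Finset.mul_sum, Finset.sum_mul]
    rw [Finset.sum_comm, Fin.sum_univ_one]
    exact Finset.sum_congr rfl fun j _ => by ring
  set t : ℝ := a ⬝ᵥ Cx.mulVec a with ht
  have htpos : 0 < t := by
    have := hCx.dotProduct_mulVec_pos (x := a) (by simpa using ha)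
    simpa using this
  set c : ℝ := (a ⬝ᵥ a)⁻¹ * (a ⬝ᵥ b₄) with hc
  have hct : c * t = 1 := by
    have h2 : a ⬝ᵥ Cx *ᵥ (c • a) = 1 := by rw [← hspan]; exact haCb
    rwa [mulVec_smul, dotProduct_smul, smul_eq_mul, ← ht] at h2
  have hcval : c = t⁻¹ := eq_inv_of_mul_eq_one_left hct
  refine ⟨claim1, ?_, ?_⟩
  · rw [hspan, hcval]
    simp only [smul_dotProduct, dotProduct_smul, smul_eq_mul]
    field_simp
  · rw [hspan, hcval]
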